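/- Fix a shift j ∈ {0,…,R−1} and define y_v(j) per agent v by writing v's layer uniquely as 4(Rc+j)+4d+e with 0 ≤ d ≤ R−1 and e ∈ {−1,1}, and setting y_v(j) = 0 if d = R−1, y_v(j) = g^-_{v,r−d} if d ≤ R−2 and e = −1, and y_v(j) = g^+_{v,r−d} if d ≤ R−2 and e = 1 (with r = R−2). Then y(j) is a feasible solution: y(j) ≥ 0 and a_{iv} y_v(j) + a_{iw} y_w(j) ≤ 1 for every constraint i with V_i = {v,w}. -/

import Mathlib

open Finset

/-- Feasibility of the shifted solution `y(j)`: with the layer of each agent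
`v` written uniquely as `4(Rc+j)+4d+e` (`0 ≤ d ≤ R−1`, `e ∈ {−1,1}`) and
`y_v(j) = 0` if `d = R−1`, `y_v(j) = g⁻_{v,r−d}` if `d ≤ R−2`, `e = −1`, and
`y_v(j) = g⁺_{v,r−d}` if `d ≤ R−2`, `e = 1` (where `r = R−2`), the vector
`y(j)` is nonnegative and satisfies `a_{iv} y_v(j) + a_{iw} y_w(j) ≤ 1` for
every constraint `i` with agents `V_i = {v,w}` (`v` the down-agent, `w` the
up-agent, at layers `ℓ` and `ℓ+2` with `ℓ ≡ 1 (mod 4)`). -/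
theorem stmt_11 {V I K : Type*} [Fintype I] [DecidableEq V]
    (R r : ℕ) (hR : 2 ≤ R) (hr : r = R - 2)
    (j : ℕ) (hj : j < R)
    (dn up : I → V) (a : I → V → ℝ)
    (hne : ∀ i, dn i ≠ up i)
    (ha : ∀ i, 0 < a i (dn i) ∧ 0 < a i (up i))
    (layer : V → ℤ)
    (hlayerI : ∀ i, layer (up i) = layer (dn i) + 2 ∧ layer (dn i) % 4 = 1)
    (hIvne : ∀ v : V, (univ.filter (fun i => dn i = v ∨ up i = v)).Nonempty)
    (kOf : V → K) (Vk : K → Finset V) (s : V → ℝ)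
    -- the smoothed recursion and its basic properties
    (gp gm : V → ℕ → ℝ)
    (hgp0 : ∀ v, gp v 0 = (univ.filter (fun i => dn i = v ∨ up i = v)).inf'
      (hIvne v) (fun i => (a i v)⁻¹))
    (hgm : ∀ v d, d ≤ r →
      gm v d = max 0 (s v - ∑ w ∈ (Vk (kOf v)).erase v, gp w d))
    (hgp : ∀ v d, 1 ≤ d → d ≤ r →
      gp v d = (univ.filter (fun i => dn i = v ∨ up i = v)).inf' (hIvne v)
        (fun i => (a i v)⁻¹ *
          (1 - a i (if dn i = v then up i else dn i) *
            gm (if dn i = v then up i else dn i) (d - 1))))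
    (hgppos : ∀ v d, d ≤ r → 0 ≤ gp v d)
    (hgmr : ∀ v, gm v r ≤ (univ.filter (fun i => dn i = v ∨ up i = v)).inf'
      (hIvne v) (fun i => (a i v)⁻¹))
    -- the decomposition of layers and the definition of y(j)
    (cd : V → ℤ) (dd : V → ℕ) (ed : V → ℤ)
    (hdec : ∀ v, layer v = 4 * (R * cd v + (j : ℤ)) + 4 * dd v + ed v ∧
      dd v ≤ R - 1 ∧ (ed v = 1 ∨ ed v = -1))
    (y : V → ℝ)
    (hy : ∀ v, y v = if dd v = R - 1 then 0
      else if ed v = -1 then gm v (r - dd v) else gp v (r - dd v)) :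
    (∀ v, 0 ≤ y v) ∧
    (∀ i, a i (dn i) * y (dn i) + a i (up i) * y (up i) ≤ 1) := by
  constructor
  · intro v
    rw [hy v]
    split_ifs with h1 h2
    · exact le_refl 0
    · rw [hgm v _ (Nat.sub_le r (dd v))]; exact le_max_left 0 _
    · exact hgppos v _ (Nat.sub_le r (dd v))
  · intro i
    obtain ⟨hav, haw⟩ := ha i
    obtain ⟨hl2, hl1⟩ := hlayerI i
    obtain ⟨hv1, hv2, hv3⟩ := hdec (dn i)
    obtain ⟨hw1, hw2, hw3⟩ := hdec (up i)
    have hmemv : i ∈ univ.filter (fun i' => dn i' = dn i ∨ up i' = dn i) :=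
      mem_filter.mpr ⟨mem_univ i, Or.inl rfl⟩
    have hmemw : i ∈ univ.filter (fun i' => dn i' = up i ∨ up i' = up i) :=
      mem_filter.mpr ⟨mem_univ i, Or.inr rfl⟩
    obtain ⟨p, hp⟩ : ∃ p : ℤ, (R : ℤ) * cd (dn i) + (j : ℤ) = p := ⟨_, rfl⟩
    obtain ⟨q, hq⟩ : ∃ q : ℤ, (R : ℤ) * cd (up i) + (j : ℤ) = q := ⟨_, rfl⟩
    rw [hp] at hv1
    rw [hq] at hw1
    have hev : ed (dn i) = 1 := by omega
    have hew : ed (up i) = -1 := by omega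
    have hpq : q + (dd (up i) : ℤ) = p + (dd (dn i) : ℤ) + 1 := by omega
    have key : (R : ℤ) * (cd (up i) - cd (dn i))
        = (dd (dn i) : ℤ) + 1 - (dd (up i) : ℤ) := by
      linear_combination hpq + hq - hp
    have hR0 : (0 : ℤ) < (R : ℤ) := by exact_mod_cast (by omega : 0 < R)
    have hle1 : cd (up i) - cd (dn i) ≤ 1 := by
      have h1 : (R : ℤ) * (cd (up i) - cd (dn i)) ≤ (R : ℤ) * 1 := by
        rw [key, mul_one]; omega
      exact le_of_mul_le_mul_left h1 hR0
    have hge0 : 0 ≤ cd (up i) - cd (dn i) := by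
      by_contra hcon
      push_neg at hcon
      have h1 : -(R : ℤ) < (R : ℤ) * (cd (up i) - cd (dn i)) := by
        rw [key]; omega
      have h2 : (R : ℤ) * (cd (up i) - cd (dn i)) ≤ (R : ℤ) * (-1) :=
        mul_le_mul_of_nonneg_left (by omega) hR0.le
      rw [mul_neg_one] at h2
      linarith
    have ht : cd (up i) - cd (dn i) = 0 ∨ cd (up i) - cd (dn i) = 1 := by omega
    rcases ht with ht | ht
    · -- same block: d_w = d_v + 1
      rw [ht, mul_zero] at key
      have hdw : dd (up i) = dd (dn i) + 1 := by omega
      by_cases hd2 : dd (dn i) = R - 2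
      · -- y w = 0, y v = gp v 0
        have hyw0 : y (up i) = 0 := by rw [hy, if_pos (by omega)]
        have hrd : r - dd (dn i) = 0 := by omega
        have hyv : y (dn i) = gp (dn i) 0 := by
          rw [hy, if_neg (by omega), if_neg (by omega), hrd]
        have hle' : gp (dn i) 0 ≤ (a i (dn i))⁻¹ := by
          rw [hgp0]; exact inf'_le _ hmemv
        have hb : a i (dn i) * gp (dn i) 0 ≤ 1 := by
          rw [← mul_inv_cancel₀ hav.ne']
          exact mul_le_mul_of_nonneg_left hle' hav.le
        rw [hyw0, hyv, mul_zero, add_zero]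
        exact hb
      · -- interior case
        have hd1 : 1 ≤ r - dd (dn i) := by omega
        have hdr : r - dd (dn i) ≤ r := Nat.sub_le _ _
        have hyv : y (dn i) = gp (dn i) (r - dd (dn i)) := by
          rw [hy, if_neg (by omega), if_neg (by omega)]
        have hyw : y (up i) = gm (up i) (r - dd (dn i) - 1) := by
          rw [hy, if_neg (by omega), if_pos hew]
          congr 1
          omega
        have hle' : gp (dn i) (r - dd (dn i)) ≤
            (a i (dn i))⁻¹ * (1 - a i (up i) * gm (up i) (r - dd (dn i) - 1)) := by
          rw [hgp (dn i) (r - dd (dn i)) hd1 hdr]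
          have h3 := inf'_le (fun i' => (a i' (dn i))⁻¹ *
            (1 - a i' (if dn i' = dn i then up i' else dn i') *
              gm (if dn i' = dn i then up i' else dn i') (r - dd (dn i) - 1))) hmemv
          exact h3.trans (le_of_eq (by simp))
        have hmain : a i (dn i) * gp (dn i) (r - dd (dn i)) ≤
            1 - a i (up i) * gm (up i) (r - dd (dn i) - 1) := by
          have h2 := mul_le_mul_of_nonneg_left hle' hav.le
          rwa [← mul_assoc, mul_inv_cancel₀ hav.ne', one_mul] at h2
        rw [hyv, hyw]
        linarith
    · -- block boundary: d_v = R-1, d_w = 0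
      rw [ht, mul_one] at key
      have hdv : dd (dn i) = R - 1 ∧ dd (up i) = 0 := by omega
      have hyv : y (dn i) = 0 := by rw [hy, if_pos hdv.1]
      have hyw : y (up i) = gm (up i) r := by
        rw [hy, if_neg (by omega), if_pos hew, hdv.2, Nat.sub_zero]
      have hle' : gm (up i) r ≤ (a i (up i))⁻¹ :=
        le_trans (hgmr (up i)) (inf'_le _ hmemw)
      have hb : a i (up i) * gm (up i) r ≤ 1 := by
        rw [← mul_inv_cancel₀ haw.ne']
        exact mul_le_mul_of_nonneg_left hle' haw.le
      rw [hyv, hyw, mul_zero, zero_add]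
      exact hb
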